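/- Let Y : M → N be a continuous map between locally compact Hausdorff spaces and S_Y its set of not-proper points. Then the restriction Y : M \ Y⁻¹(S_Y) → N \ S_Y is a proper map. -/
import Mathlib


/-- The set of points at which `Y` is not proper. -/
def notProperSet {M N : Type*} [TopologicalSpace M] [TopologicalSpace N] (Y : M → N) : Set N :=
  {y | ¬ ∃ U ∈ nhds y, IsCompact (Y ⁻¹' closure U)}

/-- The restriction `Y : M \ Y⁻¹(S_Y) → N \ S_Y` is proper. -/
theorem stmt3 {M N : Type*} [TopologicalSpace M] [TopologicalSpace N]
    [LocallyCompactSpace M] [T2Space M] [LocallyCompactSpace N] [T2Space N]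
    (Y : M → N) (hY : Continuous Y) :
    ∀ K : Set N, K ⊆ (notProperSet Y)ᶜ → IsCompact K →
      IsCompact (Y ⁻¹' K ∩ (Y ⁻¹' notProperSet Y)ᶜ) := by
  intro K hKS hK
  -- Each point of K has a neighborhood U with Y ⁻¹' closure U compact.
  have hU : ∀ y ∈ K, ∃ U ∈ nhds y, IsCompact (Y ⁻¹' closure U) := by
    intro y hy
    have := hKS hy
    simpa [notProperSet] using this
  choose! U hUnhds hUcomp using hU
  obtain ⟨t, htK, hcov⟩ := hK.elim_nhds_subcover U hUnhds
  -- The big compact set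
  have hbig : IsCompact (⋃ y ∈ t, Y ⁻¹' closure (U y)) := by
    refine t.isCompact_biUnion fun y hy => hUcomp y (htK y hy)
  have hsub : Y ⁻¹' K ∩ (Y ⁻¹' notProperSet Y)ᶜ ⊆ ⋃ y ∈ t, Y ⁻¹' closure (U y) := by
    rintro x ⟨hx, -⟩
    obtain ⟨V, hV⟩ := Set.mem_iUnion.mp (hcov hx)
    obtain ⟨hVt, hxV⟩ := Set.mem_iUnion.mp hV
    exact Set.mem_biUnion hVt (subset_closure hxV)
  have hclosed : IsClosed (Y ⁻¹' K ∩ (Y ⁻¹' notProperSet Y)ᶜ) := by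
    have h1 : IsClosed (Y ⁻¹' K) := hK.isClosed.preimage hY
    have : Y ⁻¹' K ∩ (Y ⁻¹' notProperSet Y)ᶜ = Y ⁻¹' K := by
      apply Set.inter_eq_left.mpr
      intro x hx
      exact fun h => hKS hx h
    rw [this]; exact h1
  exact hbig.of_isClosed_subset hclosed hsub
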